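/- Let m be a positive integer and let B : {1,...,m} × {1,...,m} → ℝ satisfy: B(k,l) ≥ 0 for all k, l, and B(k,l) ≤ B(k,l') whenever l ≤ l' (each row is nondecreasing). Define z_k = exp(B(k,k)) / (Σ_{l=1}^m exp(B(l,k))). Then Σ_{k=1}^m z_k ≤ ln(e·m) + max_{1≤k≤m} B(k,k). -/

import Mathlib

open Finset Real

private lemma sum_ge_one_aux (a : ℕ → ℝ) (ha : ∀ i, 1 ≤ a i) (k : ℕ) :
    1 ≤ ∑ i ∈ range (k+1), a i := by
  calc (1:ℝ) ≤ a 0 := ha 0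
  _ ≤ ∑ i ∈ range (k+1), a i := by
      apply Finset.single_le_sum (f := a) (fun i _ => le_trans zero_le_one (ha i))
      simp

private lemma log_sum_aux (a : ℕ → ℝ) (ha : ∀ i, 1 ≤ a i) :
    ∀ n, (∑ k ∈ range (n+1), a k / ∑ i ∈ range (k+1), a i)
      ≤ 1 + Real.log (∑ i ∈ range (n+1), a i) - Real.log (a 0) := by
  intro n
  induction n with
  | zero =>
      have h0 : a 0 ≠ 0 := by linarith [ha 0]
      norm_num [Finset.sum_range_one, div_self h0]
  | succ n ih =>
      have hs : (0:ℝ) < ∑ i ∈ range (n+1), a i :=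
        lt_of_lt_of_le one_pos (sum_ge_one_aux a ha n)
      have hb : (0:ℝ) < a (n+1) := lt_of_lt_of_le one_pos (ha (n+1))
      set s := ∑ i ∈ range (n+1), a i with hsdef
      have hS1 : ∑ i ∈ range (n+2), a i = s + a (n+1) := Finset.sum_range_succ a (n+1)
      have hkey : a (n+1) / (s + a (n+1)) ≤ Real.log (s + a (n+1)) - Real.log s := by
        have hsb : (0:ℝ) < s + a (n+1) := by linarith
        have h1 : Real.log (s / (s + a (n+1))) ≤ s / (s + a (n+1)) - 1 :=
          Real.log_le_sub_one_of_pos (div_pos hs hsb)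
        rw [Real.log_div (ne_of_gt hs) (ne_of_gt hsb)] at h1
        have h2 : s / (s + a (n+1)) - 1 = -(a (n+1) / (s + a (n+1))) := by
          field_simp
          ring
        linarith [h1, h2 ▸ h1]
      rw [Finset.sum_range_succ _ (n+1), hS1]
      linarith [ih, hkey]

theorem stmt_8 (m : ℕ) (hm : 0 < m) (B : Fin m → Fin m → ℝ)
    (hB0 : ∀ k l, 0 ≤ B k l)
    (hBmono : ∀ k, Monotone (B k))
    (z : Fin m → ℝ)
    (hz : ∀ k, z k = Real.exp (B k k) / ∑ l : Fin m, Real.exp (B l k)) :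
    ∑ k : Fin m, z k ≤
      Real.log (Real.exp 1 * m) +
        Finset.univ.sup' ⟨⟨0, hm⟩, Finset.mem_univ _⟩ (fun k => B k k) := by
  set M := Finset.univ.sup' ⟨⟨0, hm⟩, Finset.mem_univ _⟩ (fun k => B k k) with hM
  set a : ℕ → ℝ := fun i => if h : i < m then Real.exp (B ⟨i,h⟩ ⟨i,h⟩) else 1 with ha
  have ha1 : ∀ i, 1 ≤ a i := by
    intro i
    simp only [ha]
    split
    · exact Real.one_le_exp (hB0 _ _)
    · exact le_refl 1
  have hS : ∀ k, (1:ℝ) ≤ ∑ i ∈ range (k+1), a i := sum_ge_one_aux a ha1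
  -- step 1 : pointwise bound
  have hpt : ∀ k : Fin m, z k ≤ a k.val / ∑ i ∈ range (k.val+1), a i := by
    intro k
    rw [hz k]
    have hak : a k.val = Real.exp (B k k) := by
      simp only [ha, dif_pos k.isLt, Fin.eta]
    rw [hak]
    have hSD : (∑ i ∈ range (k.val+1), a i) ≤ ∑ l : Fin m, Real.exp (B l k) := by
      have h1 : (∑ i ∈ range (k.val+1), a i) ≤
          ∑ i ∈ range (k.val+1), (if h : i < m then Real.exp (B ⟨i,h⟩ k) else 0) := by
        apply Finset.sum_le_sum
        intro i hi
        have him : i < m := lt_of_lt_of_le (Finset.mem_range.mp hi) k.isLt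
        simp only [ha, dif_pos him]
        exact Real.exp_le_exp.mpr (hBmono ⟨i,him⟩ (by
          simpa [Fin.le_def] using Nat.lt_succ_iff.mp (Finset.mem_range.mp hi)))
      have h2 : (∑ i ∈ range (k.val+1), (if h : i < m then Real.exp (B ⟨i,h⟩ k) else 0))
          ≤ ∑ i ∈ range m, (if h : i < m then Real.exp (B ⟨i,h⟩ k) else 0) := by
        apply Finset.sum_le_sum_of_subset_of_nonneg
        · exact Finset.range_subset_range.mpr k.isLt
        · intro i _ _
          split
          · exact (Real.exp_pos _).le
          · exact le_refl 0
      have h3 : (∑ i ∈ range m, (if h : i < m then Real.exp (B ⟨i,h⟩ k) else 0))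
          = ∑ l : Fin m, Real.exp (B l k) := by
        rw [← Fin.sum_univ_eq_sum_range]
        apply Finset.sum_congr rfl
        intro l _
        simp [dif_pos l.isLt]
      linarith
    have hSpos : (0:ℝ) < ∑ i ∈ range (k.val+1), a i := lt_of_lt_of_le one_pos (hS k.val)
    exact div_le_div_of_nonneg_left (Real.exp_pos _).le hSpos hSD
  -- sum it up
  have hsum : ∑ k : Fin m, z k ≤ ∑ k ∈ range m, a k / ∑ i ∈ range (k+1), a i := by
    rw [← Fin.sum_univ_eq_sum_range (fun k => a k / ∑ i ∈ range (k+1), a i)]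
    exact Finset.sum_le_sum (fun k _ => hpt k)
  obtain ⟨n, rfl⟩ : ∃ n, m = n + 1 := ⟨m - 1, (Nat.succ_pred_eq_of_pos hm).symm⟩
  have hmain := log_sum_aux a ha1 n
  have hlog0 : 0 ≤ Real.log (a 0) := Real.log_nonneg (ha1 0)
  have hMnn : 0 ≤ M := by
    rw [hM]
    exact le_trans (hB0 ⟨0,hm⟩ ⟨0,hm⟩) (Finset.le_sup' (f := fun k => B k k) (Finset.mem_univ ⟨0,hm⟩))
  have hSub : (∑ i ∈ range (n+1), a i) ≤ (n+1 : ℝ) * Real.exp M := by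
    calc (∑ i ∈ range (n+1), a i) ≤ ∑ i ∈ range (n+1), Real.exp M := by
          apply Finset.sum_le_sum
          intro i hi
          have him : i < n + 1 := Finset.mem_range.mp hi
          simp only [ha, dif_pos him]
          exact Real.exp_le_exp.mpr (Finset.le_sup' (f := fun k => B k k)
            (Finset.mem_univ (⟨i, him⟩ : Fin (n+1))))
      _ = (n+1 : ℝ) * Real.exp M := by
          rw [Finset.sum_const, Finset.card_range]; push_cast; ring
  have hlogmono : Real.log (∑ i ∈ range (n+1), a i) ≤ Real.log ((n+1:ℝ) * Real.exp M) :=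
    Real.log_le_log (lt_of_lt_of_le one_pos (hS n)) hSub
  have hlogval : Real.log ((n+1:ℝ) * Real.exp M) = Real.log ((n:ℝ)+1) + M := by
    rw [Real.log_mul (by positivity) (Real.exp_ne_zero _), Real.log_exp]
  have hrhs : Real.log (Real.exp 1 * ((n:ℕ)+1 : ℕ)) = 1 + Real.log ((n:ℝ)+1) := by
    push_cast
    rw [Real.log_mul (Real.exp_ne_zero _) (by positivity), Real.log_exp]
  calc ∑ k : Fin (n+1), z k ≤ ∑ k ∈ range (n+1), a k / ∑ i ∈ range (k+1), a i := hsum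
    _ ≤ 1 + Real.log (∑ i ∈ range (n+1), a i) - Real.log (a 0) := hmain
    _ ≤ 1 + Real.log ((n:ℝ)+1) + M := by
        rw [hlogval] at hlogmono; linarith
    _ = Real.log (Real.exp 1 * ((n+1:ℕ):ℝ)) + M := by
        push_cast
        rw [Real.log_mul (Real.exp_ne_zero _) (by positivity), Real.log_exp]
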